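/- Let A = M − N be a splitting of A ∈ ℝ^{n×n}, let B ∈ ℝ^{n×n}, b ∈ ℝⁿ, θ ∈ [0,1), and let Ω ∈ ℝ^{n×n} be such that Ω + M is invertible. If ‖(Ω+M)^{-1}‖ < 1/[θ(‖Ω+M‖ + ‖Ω+N‖ + ‖B‖) + ‖Ω+N‖ + ‖B‖], then the GAVE F(x) = 0 has at most one solution: any x*, y* ∈ ℝⁿ with F(x*) = 0 and F(y*) = 0 satisfy x* = y*. -/

import Mathlib

open Matrix Filter

/-- Componentwise absolute value of a vector in Euclidean space. -/
noncomputable def vabs {n : ℕ} (x : EuclideanSpace ℝ (Fin n)) : EuclideanSpace ℝ (Fin n) :=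
  WithLp.toLp 2 (fun i => |x i|)

/-- A matrix acting on Euclidean space (so that vector norms are the Euclidean 2-norm). -/
noncomputable def mulV {n : ℕ} (M : Matrix (Fin n) (Fin n) ℝ) (x : EuclideanSpace ℝ (Fin n)) :
    EuclideanSpace ℝ (Fin n) :=
  Matrix.toEuclideanCLM (𝕜 := ℝ) M x

/-- Spectral norm of a real matrix: the operator norm induced by the Euclidean vector norm. -/
noncomputable def spec {n : ℕ} (M : Matrix (Fin n) (Fin n) ℝ) : ℝ :=
  ‖Matrix.toEuclideanCLM (𝕜 := ℝ) M‖

/-- The GAVE residual function `F(x) = A x − B |x| − b`. -/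
noncomputable def gaveF {n : ℕ} (A B : Matrix (Fin n) (Fin n) ℝ)
    (b : EuclideanSpace ℝ (Fin n)) (x : EuclideanSpace ℝ (Fin n)) : EuclideanSpace ℝ (Fin n) :=
  mulV A x - mulV B (vabs x) - b

/-- The AVE residual function `A x − |x| − b` (the GAVE with `B = I`). -/
noncomputable def aveF {n : ℕ} (A : Matrix (Fin n) (Fin n) ℝ)
    (b : EuclideanSpace ℝ (Fin n)) (x : EuclideanSpace ℝ (Fin n)) : EuclideanSpace ℝ (Fin n) :=
  mulV A x - vabs x - b

/-- A sequence converges linearly to `xs`: the distances to `xs` contract by a fixed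
factor `c < 1` at every step, and the sequence tends to `xs`. -/
def ConvergesLinearlyTo {n : ℕ} (x : ℕ → EuclideanSpace ℝ (Fin n))
    (xs : EuclideanSpace ℝ (Fin n)) : Prop :=
  (∃ c : ℝ, 0 ≤ c ∧ c < 1 ∧ ∀ k : ℕ, ‖x (k + 1) - xs‖ ≤ c * ‖x k - xs‖) ∧
    Tendsto x atTop (nhds xs)

lemma vabs_sub_norm_le {n : ℕ} (x y : EuclideanSpace ℝ (Fin n)) :
    ‖vabs x - vabs y‖ ≤ ‖x - y‖ := by
  rw [EuclideanSpace.norm_eq, EuclideanSpace.norm_eq]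
  apply Real.sqrt_le_sqrt
  apply Finset.sum_le_sum
  intro i _
  have h : ‖(vabs x - vabs y) i‖ ≤ ‖(x - y) i‖ := by
    simp only [PiLp.sub_apply, vabs, PiLp.toLp_apply, Real.norm_eq_abs]
    exact abs_abs_sub_abs_le_abs_sub _ _
  exact pow_le_pow_left₀ (norm_nonneg _) h 2

lemma mulV_norm_le {n : ℕ} (M : Matrix (Fin n) (Fin n) ℝ) (x : EuclideanSpace ℝ (Fin n)) :
    ‖mulV M x‖ ≤ spec M * ‖x‖ :=
  (Matrix.toEuclideanCLM (𝕜 := ℝ) M).le_opNorm x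

lemma spec_nonneg {n : ℕ} (M : Matrix (Fin n) (Fin n) ℝ) : 0 ≤ spec M :=
  norm_nonneg _

theorem stmt18 {n : ℕ} (A M N B Ω : Matrix (Fin n) (Fin n) ℝ)
    (b : EuclideanSpace ℝ (Fin n)) (hA : A = M - N) (θ : ℝ) (hθ0 : 0 ≤ θ) (hθ1 : θ < 1)
    (hinv : IsUnit (Ω + M))
    (hcond : spec (Ω + M)⁻¹ <
      1 / (θ * (spec (Ω + M) + spec (Ω + N) + spec B) + spec (Ω + N) + spec B)) :
    ∀ xs ys : EuclideanSpace ℝ (Fin n),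
      gaveF A B b xs = 0 → gaveF A B b ys = 0 → xs = ys := by
  intro xs ys hx hy
  have hdet : IsUnit (Ω + M).det := (Matrix.isUnit_iff_isUnit_det _).mp hinv
  have hPiP : (Ω + M)⁻¹ * (Ω + M) = 1 := Matrix.nonsing_inv_mul _ hdet
  set u := xs - ys with hu
  set w := vabs xs - vabs ys with hw
  simp only [gaveF] at hx hy
  have h1 : mulV A xs - mulV B (vabs xs) = b := sub_eq_zero.mp hx
  have h2 : mulV A ys - mulV B (vabs ys) = b := sub_eq_zero.mp hy
  have h3 := h1.trans h2.symm
  have hAu : mulV A u = mulV B w := by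
    simp only [mulV, hu, hw, map_sub]
    exact sub_eq_sub_iff_sub_eq_sub.mp h3
  have hPu : mulV (Ω + M) u = mulV (Ω + N) u + mulV B w := by
    have hPQ : (Ω + M) = A + (Ω + N) := by rw [hA]; abel
    simp only [mulV] at hAu ⊢
    rw [hPQ, map_add, ContinuousLinearMap.add_apply, hAu, add_comm]
  have hu_eq : u = mulV (Ω + M)⁻¹ (mulV (Ω + N) u + mulV B w) := by
    rw [← hPu]
    simp only [mulV]
    calc u = (Matrix.toEuclideanCLM (𝕜 := ℝ) ((Ω + M)⁻¹ * (Ω + M))) u := by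
          rw [hPiP, _root_.map_one, ContinuousLinearMap.one_apply]
    _ = (Matrix.toEuclideanCLM (𝕜 := ℝ) (Ω + M)⁻¹)
          ((Matrix.toEuclideanCLM (𝕜 := ℝ) (Ω + M)) u) := by
          rw [_root_.map_mul, ContinuousLinearMap.mul_apply]
  set s := spec (Ω + N) + spec B with hs
  have hs0 : 0 ≤ s := add_nonneg (spec_nonneg _) (spec_nonneg _)
  have hwu : ‖w‖ ≤ ‖u‖ := vabs_sub_norm_le xs ys
  have hbound : ‖u‖ ≤ spec (Ω + M)⁻¹ * (s * ‖u‖) := by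
    have h4 : ‖mulV (Ω + N) u + mulV B w‖ ≤ spec (Ω + N) * ‖u‖ + spec B * ‖w‖ :=
      (norm_add_le _ _).trans (add_le_add (mulV_norm_le _ _) (mulV_norm_le _ _))
    have h5 : spec B * ‖w‖ ≤ spec B * ‖u‖ :=
      mul_le_mul_of_nonneg_left hwu (spec_nonneg _)
    calc ‖u‖ = ‖mulV (Ω + M)⁻¹ (mulV (Ω + N) u + mulV B w)‖ := by rw [← hu_eq]
    _ ≤ spec (Ω + M)⁻¹ * ‖mulV (Ω + N) u + mulV B w‖ := mulV_norm_le _ _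
    _ ≤ spec (Ω + M)⁻¹ * (s * ‖u‖) := by
        apply mul_le_mul_of_nonneg_left _ (spec_nonneg _)
        rw [hs, add_mul]
        linarith
  have hc1 : spec (Ω + M)⁻¹ * s < 1 := by
    rcases eq_or_lt_of_le hs0 with h | h
    · rw [← h, mul_zero]; norm_num
    · have hθterm : 0 ≤ θ * (spec (Ω + M) + spec (Ω + N) + spec B) :=
        mul_nonneg hθ0 (by have := spec_nonneg (Ω + M); linarith)
      have hD : s ≤ θ * (spec (Ω + M) + spec (Ω + N) + spec B) + spec (Ω + N) + spec B := by
        rw [hs]; linarith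
      have hlt : spec (Ω + M)⁻¹ < 1 / s :=
        lt_of_lt_of_le hcond (one_div_le_one_div_of_le h hD)
      calc spec (Ω + M)⁻¹ * s < (1 / s) * s := mul_lt_mul_of_pos_right hlt h
      _ = 1 := by field_simp
  have hun : ‖u‖ ≤ 0 := by nlinarith [norm_nonneg u]
  have : u = 0 := norm_le_zero_iff.mp hun
  exact sub_eq_zero.mp this
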